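/- Let ∇ ⊂ N_ℝ be a reflexive polytope and v a vertex of ∇. Then for every nonzero linear functional m̂ ∈ M_ℝ with ⟨m̂, v⟩ = 0, there exists an edge θ* of ∇ containing v whose interior lies strictly in the open halfspace {n : ⟨m̂, n⟩ < 0}; i.e., there is a vertex w of ∇ adjacent to v with ⟨m̂, w⟩ < 0. -/

import Mathlib

open Finset

namespace RefEdge

variable {d : ℕ}

noncomputable def dotL (a : Fin d → ℝ) : (Fin d → ℝ) →ₗ[ℝ] ℝ where
  toFun x := ∑ i, a i * x i
  map_add' x y := by simp [mul_add, Finset.sum_add_distrib]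
  map_smul' c x := by
    simp only [Pi.smul_apply, smul_eq_mul, Finset.mul_sum, RingHom.id_apply]
    exact Finset.sum_congr rfl fun i _ => by ring

noncomputable def dotCLM (a : Fin d → ℝ) : (Fin d → ℝ) →L[ℝ] ℝ :=
  (dotL a).toContinuousLinearMap

@[simp] lemma dotCLM_apply (a x : Fin d → ℝ) : dotCLM a x = ∑ i, a i * x i := rfl

lemma dot_self_pos {a : Fin d → ℝ} (ha : a ≠ 0) : 0 < ∑ i, a i * a i := by
  have h1 : ∃ j, a j ≠ 0 := by
    by_contra h; push_neg at h; exact ha (funext h)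
  obtain ⟨j, hj⟩ := h1
  exact Finset.sum_pos' (fun i _ => mul_self_nonneg _)
    ⟨j, Finset.mem_univ j, mul_self_pos.2 hj⟩

lemma exists_dot_ne_zero (C : Finset (Fin d → ℝ)) (hC : ∀ c ∈ C, c ≠ 0) :
    ∃ h : Fin d → ℝ, ∀ c ∈ C, (∑ i, h i * c i) ≠ 0 := by
  classical
  induction C using Finset.induction with
  | empty => exact ⟨0, by simp⟩
  | @insert c₀ C hc0mem ih =>
    obtain ⟨h, hh⟩ := ih (fun c hc => hC c (Finset.mem_insert_of_mem hc))
    have hc₀ : c₀ ≠ 0 := hC c₀ (Finset.mem_insert_self _ _)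
    have hpos : 0 < ∑ i, c₀ i * c₀ i := dot_self_pos hc₀
    set B : Finset ℝ := (insert c₀ C).image
      (fun c => -(∑ i, h i * c i) / (∑ i, c₀ i * c i)) with hB
    obtain ⟨s, hs⟩ := Infinite.exists_notMem_finset (α := ℝ) B
    refine ⟨h + s • c₀, fun c hc => ?_⟩
    have hexp : (∑ i, (h + s • c₀) i * c i) = (∑ i, h i * c i) + s * ∑ i, c₀ i * c i := by
      simp [add_mul, Finset.sum_add_distrib, Finset.mul_sum, mul_assoc]
    rw [hexp]
    intro heq
    by_cases hz : (∑ i, c₀ i * c i) = 0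
    · rw [hz, mul_zero, add_zero] at heq
      have hcC : c ∈ C := by
        rcases Finset.mem_insert.1 hc with rfl | h'
        · exact absurd hz (ne_of_gt hpos)
        · exact h'
      exact hh c hcC heq
    · apply hs
      rw [hB]
      refine Finset.mem_image.2 ⟨c, hc, ?_⟩
      field_simp
      linarith [heq]

end RefEdge

open RefEdge

set_option maxHeartbeats 1000000 in
theorem reflexive_vertex_edge_into_halfspace {d : ℕ}
    (F G : Finset (Fin d → ℤ)) (P : Set (Fin d → ℝ))
    (hP : P = convexHull ℝ ((fun z : Fin d → ℤ => fun i => (z i : ℝ)) '' ↑F))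
    (h0 : (0 : Fin d → ℝ) ∈ interior P)
    (hdual : {m : Fin d → ℝ | ∀ x ∈ P, -1 ≤ ∑ i, m i * x i} =
      convexHull ℝ ((fun z : Fin d → ℤ => fun i => (z i : ℝ)) '' ↑G))
    (v : Fin d → ℝ) (hv : IsExposed ℝ P {v})
    (mh : Fin d → ℝ) (hm : mh ≠ 0) (hmv : ∑ i, mh i * v i = 0) :
    ∃ w : Fin d → ℝ, ∃ E : Set (Fin d → ℝ),
      IsExposed ℝ P E ∧ E = segment ℝ v w ∧ w ≠ v ∧ ∑ i, mh i * w i < 0 := by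
  classical
  -- basic structure
  set Vs : Set (Fin d → ℝ) := (fun z : Fin d → ℤ => fun i => (z i : ℝ)) '' ↑F with hVs
  have hVfin : Vs.Finite := F.finite_toSet.image _
  have hPconv : Convex ℝ P := hP ▸ convex_convexHull ℝ _
  have hPcomp : IsCompact P := hP ▸ hVfin.isCompact_convexHull ℝ
  set Ws : Set (Fin d → ℝ) := P.extremePoints ℝ with hWs
  have hWsub : Ws ⊆ Vs := by
    rw [hWs, hP]; exact extremePoints_convexHull_subset
  have hWfin : Ws.Finite := hVfin.subset hWsub
  have hPW : P = convexHull ℝ Ws := by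
    have h1 := closure_convexHull_extremePoints hPcomp hPconv
    rw [(hWfin.isClosed_convexHull ℝ).closure_eq] at h1
    exact h1.symm
  have hWP : Ws ⊆ P := extremePoints_subset
  set Wf : Finset (Fin d → ℝ) := hWfin.toFinset with hWfdef
  have hWfcoe : (↑Wf : Set (Fin d → ℝ)) = Ws := hWfin.coe_toFinset
  -- exposing functional for v
  obtain ⟨l, hl⟩ := hv ⟨v, rfl⟩
  have hvmem : v ∈ P ∧ ∀ y ∈ P, l y ≤ l v := by
    have : v ∈ ({v} : Set (Fin d → ℝ)) := rfl
    rw [hl] at this; exact this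
  have hvP : v ∈ P := hvmem.1
  have hstrict : ∀ x ∈ P, x ≠ v → l x < l v := by
    intro x hx hxv
    rcases lt_or_eq_of_le (hvmem.2 x hx) with h' | h'
    · exact h'
    · exfalso; apply hxv
      have : x ∈ ({v} : Set (Fin d → ℝ)) := by
        rw [hl]; exact ⟨hx, fun y hy => h' ▸ hvmem.2 y hy⟩
      exact this
  have hvW : v ∈ Ws := hv.isExtreme.mem_extremePoints
  have hvWf : v ∈ Wf := by rw [hWfdef, Set.Finite.mem_toFinset]; exact hvW
  -- a point of P with negative mh-value
  have hneg : ∃ p ∈ P, (∑ i, mh i * p i) < 0 := by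
    have hf : Continuous (fun t : ℝ => (-t) • mh) :=
      (continuous_neg).smul continuous_const
    have hopen : IsOpen ((fun t : ℝ => (-t) • mh) ⁻¹' interior P) :=
      isOpen_interior.preimage hf
    have h0' : (0 : ℝ) ∈ (fun t : ℝ => (-t) • mh) ⁻¹' interior P := by
      simp only [Set.mem_preimage, neg_zero, zero_smul]; exact h0
    obtain ⟨δ, hδ, hball⟩ := Metric.isOpen_iff.1 hopen 0 h0'
    have hmem : (δ/2 : ℝ) ∈ Metric.ball (0:ℝ) δ := by
      rw [Metric.mem_ball, Real.dist_eq, sub_zero, abs_of_pos (by linarith)]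
      linarith
    refine ⟨(-(δ/2)) • mh, interior_subset (hball hmem), ?_⟩
    have : (∑ i, mh i * ((-(δ/2)) • mh) i) = (-(δ/2)) * ∑ i, mh i * mh i := by
      simp [Finset.mul_sum, mul_assoc]
      exact Finset.sum_congr rfl fun i _ => by ring
    rw [this]
    have := dot_self_pos hm
    nlinarith
  -- D : extreme points with negative mh value
  set Df : Finset (Fin d → ℝ) := Wf.filter (fun x => (∑ i, mh i * x i) < 0) with hDf
  have hDne : Df.Nonempty := by
    obtain ⟨p, hp, hpneg⟩ := hneg
    by_contra hemp
    rw [Finset.not_nonempty_iff_eq_empty] at hemp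
    have hall : ∀ x ∈ Ws, 0 ≤ (∑ i, mh i * x i) := by
      intro x hx
      by_contra hlt
      push_neg at hlt
      have : x ∈ Df := by
        rw [hDf, Finset.mem_filter]
        exact ⟨by rw [hWfdef, Set.Finite.mem_toFinset]; exact hx, hlt⟩
      rw [hemp] at this; exact absurd this (Finset.notMem_empty x)
    have hhalf : Convex ℝ {y : Fin d → ℝ | 0 ≤ (∑ i, mh i * y i)} := by
      have := convex_halfSpace_ge (𝕜 := ℝ) (f := fun y : Fin d → ℝ => ∑ i, mh i * y i)
        ⟨(dotL mh).map_add, (dotL mh).map_smul⟩ 0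
      exact this
    have : P ⊆ {y : Fin d → ℝ | 0 ≤ (∑ i, mh i * y i)} := by
      rw [hPW]; exact convexHull_min hall hhalf
    exact absurd (this hp) (not_le.2 hpneg)
  -- mf x = -⟨mh,x⟩
  set mf : (Fin d → ℝ) → ℝ := fun x => -(∑ i, mh i * x i) with hmf
  have hmfpos : ∀ x ∈ Df, 0 < mf x := by
    intro x hx
    have := (Finset.mem_filter.1 hx).2
    simp only [hmf]; linarith
  have hDW : ∀ x ∈ Df, x ∈ Ws := by
    intro x hx
    have := (Finset.mem_filter.1 hx).1
    rwa [hWfdef, Set.Finite.mem_toFinset] at this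
  have hDv : ∀ x ∈ Df, x ≠ v := by
    intro x hx hxv
    have h2 := (Finset.mem_filter.1 hx).2
    rw [hxv, hmv] at h2
    exact absurd h2 (lt_irrefl 0)
  -- the finite set of obstruction vectors
  set C : Finset (Fin d → ℝ) := ((Df ×ˢ Df).filter (fun p => p.1 ≠ p.2)).image
    (fun p => mf p.2 • (v - p.1) - mf p.1 • (v - p.2)) with hCdef
  have hCne : ∀ c ∈ C, c ≠ 0 := by
    intro c hc
    obtain ⟨p, hp, rfl⟩ := Finset.mem_image.1 hc
    obtain ⟨hpmem, hpne⟩ := Finset.mem_filter.1 hp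
    obtain ⟨hx, hy⟩ := Finset.mem_product.1 hpmem
    set x := p.1
    set y := p.2
    intro heq0
    have heq : mf y • (v - x) = mf x • (v - y) := by
      have := sub_eq_zero.1 heq0; exact this
    have e : ∀ i, mf y * (v i - x i) = mf x * (v i - y i) := by
      intro i
      have := congrFun heq i
      simpa [Pi.smul_apply, Pi.sub_apply, smul_eq_mul] using this
    have hmx := hmfpos x hx
    have hmy := hmfpos y hy
    rcases lt_trichotomy (mf x) (mf y) with hlt | heqm | hgt
    · -- x strictly inside segment (v, y)
      set s : ℝ := mf x / mf y with hs
      have hs0 : 0 < s := div_pos hmx hmy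
      have hs1 : s < 1 := (div_lt_one hmy).2 hlt
      have hxseg : x ∈ openSegment ℝ v y := by
        refine ⟨1 - s, s, by linarith, hs0, by ring, ?_⟩
        funext i
        have := e i
        simp only [Pi.add_apply, Pi.smul_apply, smul_eq_mul, hs]
        field_simp
        nlinarith [e i]
      have hxe := (mem_extremePoints.1 (hDW x hx)).2 v hvP y (hWP (hDW y hy)) hxseg
      exact hDv x hx hxe.1.symm
    · have : ∀ i, x i = y i := by
        intro i
        have := e i
        rw [heqm] at this
        have h3 := mul_left_cancel₀ (ne_of_gt hmy) this
        linarith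
      exact hpne (funext this)
    · set s : ℝ := mf y / mf x with hs
      have hs0 : 0 < s := div_pos hmy hmx
      have hs1 : s < 1 := (div_lt_one hmx).2 hgt
      have hyseg : y ∈ openSegment ℝ v x := by
        refine ⟨1 - s, s, by linarith, hs0, by ring, ?_⟩
        funext i
        simp only [Pi.add_apply, Pi.smul_apply, smul_eq_mul, hs]
        field_simp
        nlinarith [e i]
      have hye := (mem_extremePoints.1 (hDW y hy)).2 v hvP x (hWP (hDW x hx)) hyseg
      exact hDv y hy hye.1.symm
  -- generic functional
  obtain ⟨h, hh⟩ := RefEdge.exists_dot_ne_zero C hCne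
  set A : (Fin d → ℝ) → ℝ := fun x => l v - l x with hA
  set Bf : (Fin d → ℝ) → ℝ := fun x => (∑ i, h i * v i) - (∑ i, h i * x i) with hBf
  have hWerase : ∀ x ∈ Wf.erase v, x ∈ P ∧ x ≠ v := by
    intro x hx
    obtain ⟨hxv, hxW⟩ := Finset.mem_erase.1 hx
    rw [hWfdef, Set.Finite.mem_toFinset] at hxW
    exact ⟨hWP hxW, hxv⟩
  have hApos : ∀ x ∈ Wf.erase v, 0 < A x := by
    intro x hx
    obtain ⟨hxP, hxv⟩ := hWerase x hx
    have := hstrict x hxP hxv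
    simp only [hA]; linarith
  have hWvne : (Wf.erase v).Nonempty := by
    obtain ⟨x, hx⟩ := hDne
    exact ⟨x, Finset.mem_erase.2 ⟨hDv x hx, (Finset.mem_filter.1 hx).1⟩⟩
  set εf : (Fin d → ℝ) → ℝ := fun x => A x / (1 + |Bf x|) with hεf
  set ε₀ : ℝ := ((Wf.erase v).image εf).min' (hWvne.image _) with hε₀
  have hε₀pos : 0 < ε₀ := by
    rw [hε₀, Finset.lt_min'_iff]
    intro y hy
    obtain ⟨x, hx, rfl⟩ := Finset.mem_image.1 hy
    exact div_pos (hApos x hx) (by positivity)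
  set Bad : Finset ℝ := ((Df ×ˢ Df).filter (fun p => p.1 ≠ p.2)).image
    (fun p => (A p.2 * mf p.1 - A p.1 * mf p.2) / (Bf p.1 * mf p.2 - Bf p.2 * mf p.1)) with hBad
  obtain ⟨ε, hεmem⟩ := ((Set.Ioo_infinite hε₀pos).diff Bad.finite_toSet).nonempty
  obtain ⟨hεI, hεBad⟩ := hεmem
  obtain ⟨hεpos, hεlt⟩ := hεI
  -- perturbed exposure
  have hexpε : ∀ x ∈ Wf.erase v, ε * (-Bf x) < A x := by
    intro x hx
    have hle : ε₀ ≤ εf x := Finset.min'_le _ _ (Finset.mem_image_of_mem _ hx)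
    have h1 : ε * (-Bf x) ≤ ε * |Bf x| := by
      have := neg_le_abs (Bf x)
      nlinarith
    have h2 : ε * |Bf x| < ε₀ * (1 + |Bf x|) := by nlinarith [abs_nonneg (Bf x)]
    have h3 : ε₀ * (1 + |Bf x|) ≤ εf x * (1 + |Bf x|) := by nlinarith [abs_nonneg (Bf x)]
    have h4 : εf x * (1 + |Bf x|) = A x := by
      rw [hεf]
      field_simp
    linarith
  have hnum : ∀ x ∈ Df, 0 < A x + ε * Bf x := by
    intro x hx
    have hxe : x ∈ Wf.erase v :=
      Finset.mem_erase.2 ⟨hDv x hx, (Finset.mem_filter.1 hx).1⟩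
    have := hexpε x hxe
    linarith
  set r : (Fin d → ℝ) → ℝ := fun x => (A x + ε * Bf x) / mf x with hr
  set t : ℝ := (Df.image r).min' (hDne.image _) with ht
  obtain ⟨w, hwD, hwr⟩ := Finset.mem_image.1 ((Df.image r).min'_mem (hDne.image _))
  have hwW : w ∈ Ws := hDW w hwD
  have hwP : w ∈ P := hWP hwW
  have hwWf : w ∈ Wf := by rw [hWfdef, Set.Finite.mem_toFinset]; exact hwW
  have hwneg : (∑ i, mh i * w i) < 0 := (Finset.mem_filter.1 hwD).2
  have hwv : w ≠ v := hDv w hwD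
  have htpos : 0 < t := by
    rw [ht, ← hwr, hr]
    exact div_pos (hnum w hwD) (hmfpos w hwD)
  have htle : ∀ x ∈ Df, t ≤ r x := by
    intro x hx
    rw [ht]
    exact Finset.min'_le _ _ (Finset.mem_image_of_mem _ hx)
  have htlt : ∀ x ∈ Df, x ≠ w → t < r x := by
    intro x hx hxw
    rcases lt_or_eq_of_le (htle x hx) with h' | h'
    · exact h'
    · exfalso
      -- r x = r w = t, derive ε ∈ Bad
      have hrr : r x = r w := by rw [← h', ht]; exact hwr.symm
      have hmx := hmfpos x hx
      have hmw := hmfpos w hwD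
      have hcross : (A x + ε * Bf x) * mf w = (A w + ε * Bf w) * mf x := by
        have := (div_eq_div_iff (ne_of_gt hmx) (ne_of_gt hmw)).1 hrr
        linarith
      have hKne : Bf x * mf w - Bf w * mf x ≠ 0 := by
        have hcmem : (mf w • (v - x) - mf x • (v - w)) ∈ C := by
          rw [hCdef]
          exact Finset.mem_image.2 ⟨(x, w), Finset.mem_filter.2
            ⟨Finset.mem_product.2 ⟨hx, hwD⟩, hxw⟩, rfl⟩
        have hdot := hh _ hcmem
        have hcomp : (∑ i, h i * (mf w • (v - x) - mf x • (v - w)) i)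
            = Bf x * mf w - Bf w * mf x := by
          simp only [Pi.sub_apply, Pi.smul_apply, smul_eq_mul, hBf]
          rw [sub_mul, sub_mul, Finset.sum_mul, Finset.sum_mul, Finset.sum_mul,
            Finset.sum_mul, ← Finset.sum_sub_distrib, ← Finset.sum_sub_distrib,
            ← Finset.sum_sub_distrib]
          exact Finset.sum_congr rfl fun i _ => by ring
        rw [hcomp] at hdot
        exact hdot
      have hεval : ε = (A w * mf x - A x * mf w) / (Bf x * mf w - Bf w * mf x) := by
        rw [eq_div_iff hKne]
        nlinarith [hcross]
      apply hεBad
      rw [hBad]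
      simp only [Finset.coe_image, Set.mem_image, Finset.mem_coe]
      exact ⟨(x, w), Finset.mem_filter.2
        ⟨Finset.mem_product.2 ⟨hx, hwD⟩, hxw⟩, hεval.symm⟩
  -- the exposing functional for the edge
  set L : (Fin d → ℝ) →L[ℝ] ℝ :=
    l + ε • RefEdge.dotCLM h - t • RefEdge.dotCLM mh with hL
  have hLapp : ∀ x, L x = l x + ε * (∑ i, h i * x i) - t * (∑ i, mh i * x i) := by
    intro x
    rw [hL]
    simp [ContinuousLinearMap.sub_apply, ContinuousLinearMap.add_apply,
      ContinuousLinearMap.smul_apply, RefEdge.dotCLM_apply, smul_eq_mul]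
  set c : ℝ := L v with hc
  have hcv : c = l v + ε * (∑ i, h i * v i) := by
    rw [hc, hLapp, hmv]; ring
  have hrmul : ∀ x ∈ Df, r x * mf x = A x + ε * Bf x := by
    intro x hx
    rw [hr]
    exact div_mul_cancel₀ _ (ne_of_gt (hmfpos x hx))
  have hLw : L w = c := by
    have h1 : t * mf w = A w + ε * Bf w := by
      have : t = r w := by rw [ht, hwr]
      rw [this]
      exact hrmul w hwD
    rw [hLapp, hcv]
    have h2 : t * (∑ i, mh i * w i) = -(t * mf w) := by
      simp only [hmf]; ring
    rw [h2, h1]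
    simp only [hA, hBf]
    ring
  have hLlt : ∀ x ∈ Wf, x ≠ v → x ≠ w → L x < c := by
    intro x hxW hxv hxw
    have hxe : x ∈ Wf.erase v := Finset.mem_erase.2 ⟨hxv, hxW⟩
    by_cases hxD : x ∈ Df
    · have h1 : t < r x := htlt x hxD hxw
      have h2 : t * mf x < r x * mf x :=
        mul_lt_mul_of_pos_right h1 (hmfpos x hxD)
      rw [hrmul x hxD] at h2
      rw [hLapp, hcv]
      have h3 : t * (∑ i, mh i * x i) = -(t * mf x) := by
        simp only [hmf]; ring
      rw [h3]
      simp only [hA, hBf] at h2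
      linarith
    · have hx0 : 0 ≤ (∑ i, mh i * x i) := by
        by_contra hlt
        push_neg at hlt
        exact hxD (Finset.mem_filter.2 ⟨hxW, hlt⟩)
      have h1 := hexpε x hxe
      rw [hLapp, hcv]
      simp only [hA, hBf] at h1
      nlinarith
  have hLle : ∀ x ∈ Wf, L x ≤ c := by
    intro x hxW
    by_cases hxv : x = v
    · rw [hxv]
    · by_cases hxw : x = w
      · rw [hxw, hLw]
      · exact le_of_lt (hLlt x hxW hxv hxw)
  have hmax : ∀ y ∈ P, L y ≤ c := by
    have hsub : P ⊆ {y : Fin d → ℝ | L y ≤ c} := by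
      rw [hPW, ← hWfcoe]
      have hLlin : IsLinearMap ℝ (fun y : Fin d → ℝ => L y) := ⟨L.map_add, L.map_smul⟩
      refine convexHull_min ?_ (convex_halfSpace_le hLlin c)
      intro x hx
      exact hLle x hx
    exact fun y hy => hsub hy
  set E : Set (Fin d → ℝ) := {x ∈ P | ∀ y ∈ P, L y ≤ L x} with hE
  have hexp : IsExposed ℝ P E := fun _ => ⟨L, rfl⟩
  have hvw : v ≠ w := fun hvw => hwv hvw.symm
  have hseg : E = segment ℝ v w := by
    apply Set.Subset.antisymm
    · rintro z ⟨hzP, hzmax⟩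
      have hLz : L z = c := le_antisymm (hmax z hzP) (hzmax v hvP)
      have hzW : z ∈ convexHull ℝ (↑Wf : Set (Fin d → ℝ)) := by
        rw [hWfcoe, ← hPW]; exact hzP
      obtain ⟨μ, hμ0, hμ1, hμsum⟩ := Finset.mem_convexHull'.1 hzW
      have hsum2 : ∑ x ∈ Wf, μ x * L x = c := by
        have hLsum : L (∑ x ∈ Wf, μ x • x) = ∑ x ∈ Wf, μ x * L x := by
          rw [map_sum]
          exact Finset.sum_congr rfl fun x _ => by
            rw [L.map_smul]; rfl
        rw [← hLz, ← hμsum, hLsum]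
      have hsumc : ∑ x ∈ Wf, μ x * c = c := by
        rw [← Finset.sum_mul, hμ1, one_mul]
      have hforall := (Finset.sum_eq_sum_iff_of_le
        (fun x hx => mul_le_mul_of_nonneg_left (hLle x hx) (hμ0 x hx))).1
        (by rw [hsum2, hsumc])
      have hzero : ∀ x ∈ Wf, x ≠ v → x ≠ w → μ x = 0 := by
        intro x hx hxv hxw
        have h1 := hforall x hx
        have h2 := hLlt x hx hxv hxw
        by_contra hne
        have h3 := lt_of_le_of_ne (hμ0 x hx) (Ne.symm hne)
        nlinarith
      have hsubvw : ({v, w} : Finset (Fin d → ℝ)) ⊆ Wf := by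
        intro x hx
        rcases Finset.mem_insert.1 hx with rfl | hx'
        · exact hvWf
        · rw [Finset.mem_singleton.1 hx']; exact hwWf
      have hz2 : (∑ x ∈ Wf, μ x • x) = μ v • v + μ w • w := by
        rw [← Finset.sum_subset hsubvw (fun x hx hnx => ?_)]
        · rw [Finset.sum_pair hvw]
        · have hxv : x ≠ v := fun hc => hnx (by rw [hc]; exact Finset.mem_insert_self _ _)
          have hxw : x ≠ w := fun hc => hnx (by
            rw [hc]; exact Finset.mem_insert_of_mem (Finset.mem_singleton_self _))
          rw [hzero x hx hxv hxw, zero_smul]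
      have hw2 : μ v + μ w = 1 := by
        rw [← hμ1, ← Finset.sum_subset hsubvw (fun x hx hnx => ?_)]
        · rw [Finset.sum_pair hvw]
        · have hxv : x ≠ v := fun hc => hnx (by rw [hc]; exact Finset.mem_insert_self _ _)
          have hxw : x ≠ w := fun hc => hnx (by
            rw [hc]; exact Finset.mem_insert_of_mem (Finset.mem_singleton_self _))
          exact hzero x hx hxv hxw
      exact ⟨μ v, μ w, hμ0 v hvWf, hμ0 w hwWf, hw2, by rw [← hμsum, hz2]⟩
    · rintro z ⟨a, b, ha, hb, hab, rfl⟩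
      have hzP : a • v + b • w ∈ P := hPconv hvP hwP ha hb hab
      refine ⟨hzP, fun y hy => ?_⟩
      have hLz : L (a • v + b • w) = c := by
        rw [map_add, L.map_smul, L.map_smul, hLw]
        have : a • L v = a * c := by rw [← hc]; rfl
        rw [this]
        have : b • c = b * c := rfl
        rw [this, ← add_mul, hab, one_mul]
      rw [hLz]
      exact hmax y hy
  exact ⟨w, E, hexp, hseg, hwv, hwneg⟩
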